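/- arXiv:1906.03310 — 2 statements merged into one kernel-verified Lean document; each statement's English description precedes it below -/
import Mathlib

section
/- Any classifier f' achieving the maximum of the separated-region optimization problem (choosing pairwise 2r-separated sets S_1, ..., S_C maximizing Σ_j ∫_{S_j} p(y=j|x) dμ(x)) via its robust regions has astuteness at least that of any other classifier f; i.e., the r-Optimal classifier maximizes astuteness at radius r. -/
open MeasureTheory Set
open scoped ENNReal

/-- The robustness radius of a classifier `f` at a point `x`. -/
noncomputable def robustnessRadius {E : Type*} [NormedAddCommGroup E] {C : ℕ}
    (f : E → Fin C) (x : E) : ℝ :=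
  sInf {d : ℝ | ∃ x', f x' ≠ f x ∧ d = dist x x'}

/-- The robust region `S_j(f, r)` of label `j`. -/
def robustRegion {E : Type*} [NormedAddCommGroup E] {C : ℕ}
    (f : E → Fin C) (r : ℝ) (j : Fin C) : Set E :=
  {x | f x = j ∧ r ≤ robustnessRadius f x}

/-- A tuple of measurable sets that is pairwise `2r`-separated. -/
def SepFeasible {E : Type*} [NormedAddCommGroup E] [MeasurableSpace E] {C : ℕ}
    (r : ℝ) (S : Fin C → Set E) : Prop :=
  (∀ j, MeasurableSet (S j)) ∧
    ∀ j j', j ≠ j' → ∀ u ∈ S j, ∀ v ∈ S j', 2 * r ≤ dist u v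


private lemma rad_le' {E : Type*} [NormedAddCommGroup E] {C : ℕ} (f : E → Fin C) (x x' : E)
    (h : f x' ≠ f x) : robustnessRadius f x ≤ dist x x' := by
  apply csInf_le
  · exact ⟨0, fun d ⟨y, _, hd⟩ => hd ▸ dist_nonneg⟩
  · exact ⟨x', h, rfl⟩

private lemma sep_regions' {E : Type*} [NormedAddCommGroup E] [NormedSpace ℝ E] {C : ℕ}
    (f : E → Fin C) (r : ℝ) (j j' : Fin C) (h : j ≠ j')
    (u : E) (hu : u ∈ robustRegion f r j) (v : E) (hv : v ∈ robustRegion f r j') :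
    2 * r ≤ dist u v := by
  obtain ⟨hfu, hru⟩ := hu
  obtain ⟨hfv, hrv⟩ := hv
  set m := midpoint ℝ u v
  by_cases hm : f m = f u
  · have hne : f m ≠ f v := by rw [hm, hfu, hfv]; exact fun hh => h hh
    have := rad_le' f v m hne
    have hd : dist m v = dist u v / 2 := by
      rw [dist_midpoint_right (𝕜 := ℝ), Real.norm_two]; ring
    rw [dist_comm] at this
    nlinarith [hrv, this, hd]
  · have := rad_le' f u m hm
    have hd : dist u m = dist u v / 2 := by
      rw [dist_left_midpoint (𝕜 := ℝ), Real.norm_two]; ring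
    nlinarith [hru, this]

private lemma astute_decomp' {E : Type*} [NormedAddCommGroup E] [MeasurableSpace E] {C : ℕ}
    (μ : MeasureTheory.Measure (E × Fin C)) (f : E → Fin C) (r : ℝ)
    (hS : ∀ j, MeasurableSet (robustRegion f r j)) :
    μ {q : E × Fin C | r ≤ robustnessRadius f q.1 ∧ f q.1 = q.2} =
      ∑ j : Fin C, μ (robustRegion f r j ×ˢ ({j} : Set (Fin C))) := by
  have hset : {q : E × Fin C | r ≤ robustnessRadius f q.1 ∧ f q.1 = q.2} =
      ⋃ j : Fin C, robustRegion f r j ×ˢ ({j} : Set (Fin C)) := by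
    ext ⟨x, y⟩
    simp only [mem_setOf_eq, mem_iUnion, mem_prod, mem_singleton_iff, robustRegion]
    constructor
    · rintro ⟨h1, h2⟩; exact ⟨y, ⟨h2, h1⟩, rfl⟩
    · rintro ⟨j, ⟨h2, h1⟩, rfl⟩; exact ⟨h1, h2⟩
  rw [hset, measure_iUnion, tsum_fintype]
  · intro j j' hne
    simp only [Function.onFun, Set.disjoint_left]
    rintro ⟨x, y⟩ ⟨_, hy⟩ ⟨_, hy'⟩
    exact hne (hy.symm.trans hy')
  · exact fun j => (hS j).prod (measurableSet_singleton j)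

/-- If the robust regions of a classifier `fopt` achieve the supremum of the
separated-region optimization problem, then `fopt` maximizes astuteness at radius `r`:
any classifier `f` has astuteness at most that of `fopt`. -/
theorem stmt2 {E : Type*} [NormedAddCommGroup E] [NormedSpace ℝ E] [MeasurableSpace E]
    {C : ℕ} (μ : Measure (E × Fin C)) [IsProbabilityMeasure μ]
    (r : ℝ) (hr : 0 < r) (p : Fin C → E → ℝ≥0∞)
    (hp : ∀ (j : Fin C) (A : Set E), MeasurableSet A →
      μ (A ×ˢ ({j} : Set (Fin C))) = ∫⁻ x in A, p j x ∂(μ.map Prod.fst))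
    (fopt : E → Fin C)
    (hSopt : ∀ j, MeasurableSet (robustRegion fopt r j))
    (hach : ∑ j : Fin C, ∫⁻ x in robustRegion fopt r j, p j x ∂(μ.map Prod.fst) =
      ⨆ (S : Fin C → Set E) (_ : SepFeasible r S),
        ∑ j : Fin C, ∫⁻ x in S j, p j x ∂(μ.map Prod.fst))
    (f : E → Fin C) (hS : ∀ j, MeasurableSet (robustRegion f r j)) :
    μ {q : E × Fin C | r ≤ robustnessRadius f q.1 ∧ f q.1 = q.2} ≤
      μ {q : E × Fin C | r ≤ robustnessRadius fopt q.1 ∧ fopt q.1 = q.2} := by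
  rw [astute_decomp' μ f r hS, astute_decomp' μ fopt r hSopt]
  calc ∑ j : Fin C, μ (robustRegion f r j ×ˢ ({j} : Set (Fin C)))
      = ∑ j : Fin C, ∫⁻ x in robustRegion f r j, p j x ∂(μ.map Prod.fst) :=
        Finset.sum_congr rfl fun j _ => hp j _ (hS j)
    _ ≤ ⨆ (S : Fin C → Set E) (_ : SepFeasible r S),
        ∑ j : Fin C, ∫⁻ x in S j, p j x ∂(μ.map Prod.fst) := by
        apply le_iSup₂ (f := fun (S : Fin C → Set E) (_ : SepFeasible r S) =>
          ∑ j : Fin C, ∫⁻ x in S j, p j x ∂(μ.map Prod.fst)) (robustRegion f r)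
        exact ⟨hS, fun j j' h u hu v hv => sep_regions' f r j j' h u hu v hv⟩
    _ = ∑ j : Fin C, ∫⁻ x in robustRegion fopt r j, p j x ∂(μ.map Prod.fst) := hach.symm
    _ = ∑ j : Fin C, μ (robustRegion fopt r j ×ˢ ({j} : Set (Fin C))) :=
        Finset.sum_congr rfl fun j _ => (hp j _ (hSopt j)).symm
end

section
/- For every classifier f and radius r, the astuteness of f at radius r is at most the supremum of Σ_j ∫_{S_j} p(y=j|x) dμ(x) over all tuples of pairwise 2r-separated measurable sets S_1, ..., S_C. -/
open MeasureTheory Set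
open scoped ENNReal

lemma radius_le {E : Type*} [NormedAddCommGroup E] {C : ℕ} (f : E → Fin C)
    {u x' : E} (h : f x' ≠ f u) {r : ℝ} (hr : r ≤ robustnessRadius f u) :
    r ≤ dist u x' := by
  refine le_trans hr (csInf_le ⟨0, ?_⟩ ⟨x', h, rfl⟩)
  rintro d ⟨y, hy, rfl⟩; exact dist_nonneg

lemma sep_robust {E : Type*} [NormedAddCommGroup E] [NormedSpace ℝ E] [MeasurableSpace E]
    {C : ℕ} (f : E → Fin C) (r : ℝ)
    (hS : ∀ j, MeasurableSet (robustRegion f r j)) :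
    SepFeasible r (robustRegion f r) := by
  refine ⟨hS, ?_⟩
  rintro j j' hjj' u ⟨hu1, hu2⟩ v ⟨hv1, hv2⟩
  set m := midpoint ℝ u v
  have hne : f u ≠ f v := by rw [hu1, hv1]; exact hjj'
  rcases eq_or_ne (f m) (f u) with h | h
  · have : r ≤ dist v m := radius_le f (by rw [h]; exact hne) hv2
    have hm : dist v m = dist u v / 2 := by
      rw [dist_comm, dist_midpoint_right]; norm_num; ring
    linarith [this.trans_eq hm]
  · have : r ≤ dist u m := radius_le f h hu2
    have hm : dist u m = dist u v / 2 := by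
      rw [dist_comm, dist_midpoint_left]; norm_num; ring
    linarith [this.trans_eq hm]

/-- The astuteness of any classifier `f` at radius `r` is at most the supremum of
`Σ_j ∫_{S_j} p(y = j ∣ x) dμ_X(x)` over all pairwise `2r`-separated tuples of measurable
sets `S_1, …, S_C`. -/
theorem stmt3 {E : Type*} [NormedAddCommGroup E] [NormedSpace ℝ E] [MeasurableSpace E]
    {C : ℕ} (μ : Measure (E × Fin C)) [IsProbabilityMeasure μ]
    (f : E → Fin C) (r : ℝ) (hr : 0 < r) (p : Fin C → E → ℝ≥0∞)
    (hp : ∀ (j : Fin C) (A : Set E), MeasurableSet A →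
      μ (A ×ˢ ({j} : Set (Fin C))) = ∫⁻ x in A, p j x ∂(μ.map Prod.fst))
    (hS : ∀ j, MeasurableSet (robustRegion f r j)) :
    μ {q : E × Fin C | r ≤ robustnessRadius f q.1 ∧ f q.1 = q.2} ≤
      ⨆ (S : Fin C → Set E) (_ : SepFeasible r S),
        ∑ j : Fin C, ∫⁻ x in S j, p j x ∂(μ.map Prod.fst) := by
  have hsub : {q : E × Fin C | r ≤ robustnessRadius f q.1 ∧ f q.1 = q.2} =
      ⋃ j : Fin C, (robustRegion f r j) ×ˢ ({j} : Set (Fin C)) := by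
    ext ⟨x, y⟩
    simp only [mem_setOf_eq, mem_iUnion, mem_prod, mem_singleton_iff, robustRegion]
    constructor
    · rintro ⟨h1, h2⟩; exact ⟨y, ⟨h2, h1⟩, rfl⟩
    · rintro ⟨j, ⟨h2, h1⟩, rfl⟩; exact ⟨h1, h2⟩
  calc μ {q : E × Fin C | r ≤ robustnessRadius f q.1 ∧ f q.1 = q.2}
      ≤ ∑ j : Fin C, μ ((robustRegion f r j) ×ˢ ({j} : Set (Fin C))) := by
        rw [hsub]; exact measure_iUnion_fintype_le μ _
    _ = ∑ j : Fin C, ∫⁻ x in robustRegion f r j, p j x ∂(μ.map Prod.fst) := by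
        exact Finset.sum_congr rfl fun j _ => hp j _ (hS j)
    _ ≤ _ := le_iSup₂_of_le (robustRegion f r) (sep_robust f r hS) le_rfl
end
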